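/- For all real numbers a > 0 and b > 0, the relative pressure P(b,a) := b log b − a log a + (a − b)(1 + log a) satisfies P(b,a) ≥ (1/2) · min(1/a, 1/b) · (b − a)². -/

import Mathlib

private lemma rp_aux1 (t : ℝ) (ht : 1 ≤ t) :
    (t - 1) ^ 2 / (2 * t) ≤ t * Real.log t - t + 1 := by
  have ht0 : (0:ℝ) < t := lt_of_lt_of_le one_pos ht
  set g : ℝ → ℝ := fun t => t * Real.log t - t + 1 - (t - 2 + t⁻¹) / 2 with hgdef
  have hg : ∀ x : ℝ, 0 < x →
      HasDerivAt g (Real.log x + 1 - 1 - (1 + -(x ^ 2)⁻¹) / 2) x := by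
    intro x hx
    exact (((Real.hasDerivAt_mul_log hx.ne').sub (hasDerivAt_id x)).add_const 1).sub
      ((((hasDerivAt_id x).sub_const 2).add (hasDerivAt_inv hx.ne')).div_const 2)
  have mono : MonotoneOn g (Set.Ici 1) := by
    apply monotoneOn_of_deriv_nonneg (convex_Ici 1)
    · intro x hx
      exact (hg x (lt_of_lt_of_le one_pos hx)).continuousAt.continuousWithinAt
    · intro x hx
      rw [interior_Ici] at hx
      exact (hg x (lt_trans one_pos hx)).differentiableAt.differentiableWithinAt
    · intro x hx
      rw [interior_Ici] at hx
      have hx0 : (0:ℝ) < x := lt_trans one_pos hx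
      rw [(hg x hx0).deriv]
      have hlog : 1 - x⁻¹ ≤ Real.log x := Real.one_sub_inv_le_log_of_pos hx0
      have h1 : x⁻¹ * x = 1 := inv_mul_cancel₀ hx0.ne'
      have h2 : (x ^ 2)⁻¹ * x ^ 2 = 1 := inv_mul_cancel₀ (pow_pos hx0 2).ne'
      nlinarith [sq_nonneg (x - 1), sq_nonneg x⁻¹, (Set.mem_Ioi.mp hx).le]
  have h0 : g 1 ≤ g t := mono (by norm_num) ht ht
  have hg1 : g 1 = 0 := by simp [hgdef]; norm_num
  have hinv : t⁻¹ * t = 1 := inv_mul_cancel₀ ht0.ne'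
  have : 0 ≤ g t := hg1 ▸ h0
  have heq : (t - 1) ^ 2 / (2 * t) = (t - 2 + t⁻¹) / 2 := by
    field_simp
    ring
  rw [heq]
  simp only [hgdef] at this
  linarith [this]

private lemma rp_aux2 (t : ℝ) (ht0 : 0 < t) (ht : t ≤ 1) :
    (t - 1) ^ 2 / 2 ≤ t * Real.log t - t + 1 := by
  set h : ℝ → ℝ := fun t => t * Real.log t - t + 1 - (t - 1) ^ 2 / 2 with hhdef
  have hh : ∀ x : ℝ, 0 < x →
      HasDerivAt h (Real.log x + 1 - 1 - (2 * (x - 1) ^ 1 * 1) / 2) x := by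
    intro x hx
    exact (((Real.hasDerivAt_mul_log hx.ne').sub (hasDerivAt_id x)).add_const 1).sub
      ((((hasDerivAt_id x).sub_const 1).pow 2).div_const 2)
  have anti : AntitoneOn h (Set.Ioc 0 1) := by
    apply antitoneOn_of_deriv_nonpos (convex_Ioc 0 1)
    · intro x hx
      exact (hh x hx.1).continuousAt.continuousWithinAt
    · intro x hx
      rw [interior_Ioc] at hx
      exact (hh x hx.1).differentiableAt.differentiableWithinAt
    · intro x hx
      rw [interior_Ioc] at hx
      rw [(hh x hx.1).deriv]
      have hlog : Real.log x ≤ x - 1 := Real.log_le_sub_one_of_pos hx.1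
      nlinarith
  have h0 : h 1 ≤ h t := anti ⟨ht0, ht⟩ (by norm_num) ht
  have hh1 : h 1 = 0 := by simp [hhdef]
  have : 0 ≤ h t := hh1 ▸ h0
  simp only [hhdef] at this
  linarith

/-- **Relative pressure bound.** For all `a, b > 0`, the relative pressure
`P(b,a) = b log b − a log a + (a − b)(1 + log a)` satisfies
`P(b,a) ≥ (1/2) min(1/a, 1/b) (b − a)²`. -/
theorem relative_pressure_bound (a b : ℝ) (ha : 0 < a) (hb : 0 < b) :
    (1/2) * min (1/a) (1/b) * (b - a) ^ 2
      ≤ b * Real.log b - a * Real.log a + (a - b) * (1 + Real.log a) := by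
  have hba : 0 < b / a := div_pos hb ha
  have hlogdiv : Real.log (b / a) = Real.log b - Real.log a := Real.log_div hb.ne' ha.ne'
  have hRHS : b * Real.log b - a * Real.log a + (a - b) * (1 + Real.log a)
      = a * ((b / a) * Real.log (b / a) - (b / a) + 1) := by
    rw [hlogdiv]
    field_simp
    ring
  rcases le_total a b with hab | hab
  · -- a ≤ b, so min (1/a) (1/b) = 1/b and t = b/a ≥ 1
    have hmin : min (1/a) (1/b) = 1/b := by
      apply min_eq_right
      exact one_div_le_one_div_of_le ha hab
    have ht : 1 ≤ b / a := (one_le_div ha).mpr hab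
    have key := rp_aux1 (b / a) ht
    rw [hmin, hRHS]
    have : a * ((b / a - 1) ^ 2 / (2 * (b / a))) ≤ a * ((b / a) * Real.log (b / a) - (b / a) + 1) :=
      mul_le_mul_of_nonneg_left key ha.le
    calc (1/2) * (1/b) * (b - a) ^ 2 = a * ((b / a - 1) ^ 2 / (2 * (b / a))) := by
          field_simp
      _ ≤ _ := this
  · -- b ≤ a, so min (1/a) (1/b) = 1/a and t = b/a ≤ 1
    have hmin : min (1/a) (1/b) = 1/a := by
      apply min_eq_left
      exact one_div_le_one_div_of_le hb hab
    have ht : b / a ≤ 1 := (div_le_one ha).mpr hab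
    have key := rp_aux2 (b / a) hba ht
    rw [hmin, hRHS]
    have : a * ((b / a - 1) ^ 2 / 2) ≤ a * ((b / a) * Real.log (b / a) - (b / a) + 1) :=
      mul_le_mul_of_nonneg_left key ha.le
    calc (1/2) * (1/a) * (b - a) ^ 2 = a * ((b / a - 1) ^ 2 / 2) := by
          field_simp
      _ ≤ _ := this
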